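/- For positive semidefinite A, B ∈ Mₙ(ℂ), let S_A(x) = A ∘ x denote the Schur (Hadamard) multiplier. Then the Choi matrix of S_A equals V A V* where V : ℂⁿ → ℂⁿ ⊗ ℂⁿ is the isometry V eᵢ = eᵢ ⊗ eᵢ, and consequently the geometric mean of Schur multipliers satisfies S_A # S_B = S_{A#B}. -/

import Mathlib

open Matrix
open scoped ComplexOrder

/-- A linear map between matrix algebras is completely positive if every amplification
`id_{M_k} ⊗ Φ` preserves positive semidefiniteness. -/
def IsCP {m n : Type*} [Fintype m] [Fintype n]
    (Φ : Matrix m m ℂ →ₗ[ℂ] Matrix n n ℂ) : Prop :=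
  ∀ (k : ℕ) (M : Matrix (Fin k × m) (Fin k × m) ℂ), M.PosSemidef →
    (Matrix.of fun p q : Fin k × n =>
      Φ (Matrix.of fun x y => M (p.1, x) (q.1, y)) p.2 q.2).PosSemidef

/-- The Choi matrix `C_Φ = Σ_{i,j} e_{ij} ⊗ Φ(e_{ij})`. -/
noncomputable def choi {m n : Type*} [Fintype m] [DecidableEq m] [Fintype n]
    (Φ : Matrix m m ℂ →ₗ[ℂ] Matrix n n ℂ) : Matrix (m × n) (m × n) ℂ :=
  ∑ i : m, ∑ j : m,
    Matrix.kroneckerMap (· * ·) (Matrix.single i j 1) (Φ (Matrix.single i j 1))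

/-- The block map `x ↦ [[Φ(x), Θ(x)],[Θ(x), Ψ(x)]]`. -/
noncomputable def blockMap {m n : Type*} [Fintype m] [Fintype n]
    (Φ Θ Ψ : Matrix m m ℂ →ₗ[ℂ] Matrix n n ℂ) :
    Matrix m m ℂ →ₗ[ℂ] Matrix (n ⊕ n) (n ⊕ n) ℂ where
  toFun x := Matrix.fromBlocks (Φ x) (Θ x) (Θ x) (Ψ x)
  map_add' x y := by ext (i | i) (j | j) <;> simp [Matrix.fromBlocks]
  map_smul' c x := by ext (i | i) (j | j) <;> simp [Matrix.fromBlocks]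

/-- `G` is the matrix geometric mean of `A` and `B`: the maximum positive semidefinite
`X` with `[[A, X],[X, B]] ≥ 0`. -/
def IsGeomMean {N : Type*} [Fintype N] (A B G : Matrix N N ℂ) : Prop :=
  G.PosSemidef ∧ (Matrix.fromBlocks A G G B).PosSemidef ∧
    ∀ X : Matrix N N ℂ, X.PosSemidef → (Matrix.fromBlocks A X X B).PosSemidef →
      (G - X).PosSemidef

/-- The Schur (Hadamard) multiplier `S_A(x) = A ∘ x`. -/
noncomputable def schurMap {n : Type*} [Fintype n] (A : Matrix n n ℂ) :
    Matrix n n ℂ →ₗ[ℂ] Matrix n n ℂ where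
  toFun x := Matrix.hadamard A x
  map_add' x y := by ext i j; simp [Matrix.hadamard, mul_add]
  map_smul' c x := by ext i j; simp [Matrix.hadamard]; ring

section AuxLemmas

/-- Schur product theorem. -/
lemma psd_hadamard {n : Type*} [Fintype n] {M N : Matrix n n ℂ}
    (hM : M.PosSemidef) (hN : N.PosSemidef) : (M.hadamard N).PosSemidef := by
  obtain ⟨C, rfl⟩ : ∃ C : Matrix n n ℂ, M = Cᴴ * C := by
    classical
    open scoped MatrixOrder in exact CStarAlgebra.nonneg_iff_eq_star_mul_self.mp hM.nonneg
  obtain ⟨D, rfl⟩ : ∃ D : Matrix n n ℂ, N = Dᴴ * D := by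
    classical
    open scoped MatrixOrder in exact CStarAlgebra.nonneg_iff_eq_star_mul_self.mp hN.nonneg
  have : (Cᴴ * C).hadamard (Dᴴ * D) =
      (Matrix.of fun (p : n × n) b => C p.1 b * D p.2 b)ᴴ *
      (Matrix.of fun (p : n × n) b => C p.1 b * D p.2 b) := by
    ext a b
    simp only [hadamard_apply, mul_apply, conjTranspose_apply, of_apply, star_mul']
    rw [Finset.sum_mul_sum, Fintype.sum_prod_type]
    exact Finset.sum_congr rfl fun k _ => Finset.sum_congr rfl fun l _ => by ring
  rw [this]
  exact posSemidef_conjTranspose_mul_self _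

lemma psd_row_col_zero {N : Type*} [Fintype N] [DecidableEq N] {M : Matrix N N ℂ}
    (hM : M.PosSemidef) {s : N} (hs : M s s = 0) (t : N) : M t s = 0 ∧ M s t = 0 := by
  have h0 : star (Pi.single s 1 : N → ℂ) ⬝ᵥ M *ᵥ Pi.single s 1 = 0 := by
    simp [dotProduct, mulVec, Pi.single_apply, Finset.sum_ite_eq, hs]
  have hcol := (hM.dotProduct_mulVec_zero_iff _).mp h0
  have hts : M t s = 0 := by
    have := congrFun hcol t
    simpa [mulVec, dotProduct, Pi.single_apply, Finset.sum_ite_eq] using this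
  exact ⟨hts, by rw [← hM.1.apply s t, hts, star_zero]⟩

lemma psd_antisymm {N : Type*} [Fintype N] [DecidableEq N] {M : Matrix N N ℂ}
    (h1 : M.PosSemidef) (h2 : (-M).PosSemidef) : M = 0 := by
  have hz : ∀ x : N → ℂ, M *ᵥ x = 0 := by
    intro x
    refine (h1.dotProduct_mulVec_zero_iff x).mp ?_
    have hb := h2.dotProduct_mulVec_nonneg x
    rw [neg_mulVec, dotProduct_neg] at hb
    exact le_antisymm (neg_nonneg.mp hb) (h1.dotProduct_mulVec_nonneg x)
  ext i j
  have := congrFun (hz (Pi.single j 1)) i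
  simpa [mulVec, dotProduct, Pi.single_apply, Finset.sum_ite_eq] using this

lemma choi_apply {m n : Type*} [Fintype m] [DecidableEq m] [Fintype n]
    (Φ : Matrix m m ℂ →ₗ[ℂ] Matrix n n ℂ) (i j : m) (a b : n) :
    choi Φ (i, a) (j, b) = Φ (Matrix.single i j 1) a b := by
  simp [choi, Matrix.sum_apply, kroneckerMap_apply, Matrix.single, ite_and,
    Finset.sum_ite_eq, Finset.sum_ite_eq']

lemma choi_inj {m n : Type*} [Fintype m] [DecidableEq m] [Fintype n]
    {Φ Ψ : Matrix m m ℂ →ₗ[ℂ] Matrix n n ℂ} (h : choi Φ = choi Ψ) : Φ = Ψ := by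
  have hbasis : ∀ i j : m, Φ (Matrix.single i j 1) = Ψ (Matrix.single i j 1) := by
    intro i j; ext a b
    rw [← choi_apply, ← choi_apply, h]
  apply LinearMap.ext; intro x
  rw [matrix_eq_sum_single x]
  simp only [map_sum]
  refine Finset.sum_congr rfl fun i _ => Finset.sum_congr rfl fun j _ => ?_
  rw [show Matrix.single i j (x i j) = (x i j) • Matrix.single i j 1 from by
      rw [smul_single, smul_eq_mul, mul_one], LinearMap.map_smul, LinearMap.map_smul,
    hbasis]

def Vmat (n : Type*) [DecidableEq n] : Matrix (n × n) n ℂ :=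
  Matrix.of fun p i => if p = (i, i) then 1 else 0

variable {n : Type*} [Fintype n] [DecidableEq n]

lemma VXV_apply (X : Matrix n n ℂ) (i j : n) (a b : n) :
    (Vmat n * X * (Vmat n)ᴴ) (i, a) (j, b) = if i = a ∧ j = b then X i j else 0 := by
  simp only [mul_apply, Vmat, conjTranspose_apply, of_apply, Prod.mk.injEq, ite_and,
    ite_mul, one_mul, zero_mul, apply_ite (starRingEnd ℂ), apply_ite (star : ℂ → ℂ),
    star_one, star_zero, _root_.map_one, _root_.map_zero, mul_ite, mul_one, mul_zero,
    Finset.sum_ite_eq, Finset.mem_univ, if_true]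
  by_cases hia : a = i <;> by_cases hjb : b = j <;> simp_all [eq_comm]

lemma VV_eq_one : (Vmat n)ᴴ * Vmat n = (1 : Matrix n n ℂ) := by
  ext i j
  simp only [mul_apply, Vmat, conjTranspose_apply, of_apply, Prod.mk.injEq, Prod.ext_iff,
    ite_and, apply_ite (starRingEnd ℂ), apply_ite (star : ℂ → ℂ), star_one, star_zero,
    _root_.map_one, _root_.map_zero, ite_mul, one_mul, zero_mul,
    Fintype.sum_prod_type, Finset.sum_ite_eq, Finset.mem_univ, if_true, Matrix.one_apply]
  by_cases h : i = j <;> simp_all [eq_comm]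

lemma Vred (Y : Matrix n n ℂ) :
    (Vmat n)ᴴ * (Vmat n * Y * (Vmat n)ᴴ) * Vmat n = Y := by
  rw [show (Vmat n)ᴴ * (Vmat n * Y * (Vmat n)ᴴ) * Vmat n
      = ((Vmat n)ᴴ * Vmat n) * Y * ((Vmat n)ᴴ * Vmat n) by simp only [Matrix.mul_assoc],
    VV_eq_one, Matrix.one_mul, Matrix.mul_one]

lemma choi_schurMap (X : Matrix n n ℂ) :
    choi (schurMap X) = Vmat n * X * (Vmat n)ᴴ := by
  ext ⟨i, a⟩ ⟨j, b⟩
  rw [VXV_apply, choi_apply]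
  show X a b * Matrix.single i j 1 a b = _
  simp only [Matrix.single, of_apply, ite_and, mul_ite, mul_one, mul_zero]
  by_cases hia : i = a <;> by_cases hjb : j = b <;> simp_all

/-- CP of the block of Schur multipliers from block positivity. -/
lemma blockSchur_isCP (A X B : Matrix n n ℂ)
    (h : (fromBlocks A X X B).PosSemidef) :
    IsCP (blockMap (schurMap A) (schurMap X) (schurMap B)) := by
  intro k M hM
  have hF := h.submatrix (fun p : Fin k × (n ⊕ n) => p.2)
  have hM' := hM.submatrix (fun p : Fin k × (n ⊕ n) => (p.1, Sum.elim id id p.2))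
  have heq : (Matrix.of fun p q : Fin k × (n ⊕ n) =>
      (blockMap (schurMap A) (schurMap X) (schurMap B))
        (Matrix.of fun x y => M (p.1, x) (q.1, y)) p.2 q.2)
      = ((fromBlocks A X X B).submatrix (fun p : Fin k × (n ⊕ n) => p.2)
          (fun p : Fin k × (n ⊕ n) => p.2)).hadamard
        (M.submatrix (fun p : Fin k × (n ⊕ n) => (p.1, Sum.elim id id p.2))
          (fun p : Fin k × (n ⊕ n) => (p.1, Sum.elim id id p.2))) := by
    ext ⟨p, u⟩ ⟨q, v⟩
    cases u <;> cases v <;>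
      simp [blockMap, schurMap, fromBlocks, submatrix_apply, hadamard_apply]
  rw [heq]
  exact psd_hadamard hF hM'

/-- The Choi matrix of a CP map is positive semidefinite. -/
lemma choi_psd_of_isCP {m l : Type*} [Fintype m] [DecidableEq m] [Fintype l]
    {Φ : Matrix m m ℂ →ₗ[ℂ] Matrix l l ℂ} (h : IsCP Φ) : (choi Φ).PosSemidef := by
  classical
  set k := Fintype.card m with hk
  let e : Fin k ≃ m := (Fintype.equivFin m).symm
  let W : Matrix Unit (Fin k × m) ℂ := Matrix.of fun _ s => if e s.1 = s.2 then 1 else 0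
  have hM : (Wᴴ * W).PosSemidef := posSemidef_conjTranspose_mul_self W
  have hO := h k _ hM
  have key : ∀ p q : Fin k, (Matrix.of fun x y : m => (Wᴴ * W) (p, x) (q, y))
      = Matrix.single (e p) (e q) 1 := by
    intro p q; ext x y
    by_cases h1 : e p = x <;> by_cases h2 : e q = y <;>
      simp [W, mul_apply, conjTranspose_apply, Matrix.single, h1, h2]
  have hch : choi Φ = (Matrix.of fun p q : Fin k × l =>
      Φ (Matrix.of fun x y => (Wᴴ * W) (p.1, x) (q.1, y)) p.2 q.2).submatrix
      (fun s : m × l => (e.symm s.1, s.2)) (fun s : m × l => (e.symm s.1, s.2)) := by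
    ext ⟨i, a⟩ ⟨j, b⟩
    rw [submatrix_apply, of_apply]
    show choi Φ (i, a) (j, b) = Φ (Matrix.of fun x y => (Wᴴ * W) (e.symm i, x) (e.symm j, y)) a b
    rw [key, choi_apply, e.apply_symm_apply, e.apply_symm_apply]
  rw [hch]
  exact hO.submatrix _

lemma fromBlocks_choi_psd {Φ Θ Ψ : Matrix n n ℂ →ₗ[ℂ] Matrix n n ℂ}
    (h : IsCP (blockMap Φ Θ Ψ)) :
    (fromBlocks (choi Φ) (choi Θ) (choi Θ) (choi Ψ)).PosSemidef := by
  have hc := choi_psd_of_isCP h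
  have heq : fromBlocks (choi Φ) (choi Θ) (choi Θ) (choi Ψ)
      = (choi (blockMap Φ Θ Ψ)).submatrix
        (Sum.elim (fun s : n × n => (s.1, Sum.inl s.2)) (fun s : n × n => (s.1, Sum.inr s.2)))
        (Sum.elim (fun s : n × n => (s.1, Sum.inl s.2)) (fun s : n × n => (s.1, Sum.inr s.2))) := by
    ext (⟨i, a⟩ | ⟨i, a⟩) (⟨j, b⟩ | ⟨j, b⟩) <;>
      simp [choi_apply, blockMap, fromBlocks]
  rw [heq]
  exact hc.submatrix _

lemma fromBlocks_diag_psd {A B : Matrix n n ℂ} (hA : A.PosSemidef) (hB : B.PosSemidef) :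
    (fromBlocks A (0 : Matrix n n ℂ) (0 : Matrix n n ℂ) B).PosSemidef := by
  open scoped MatrixOrder in
  have heq : fromBlocks A (0 : Matrix n n ℂ) (0 : Matrix n n ℂ) B
      = (fromBlocks (CFC.sqrt A) 0 0 (CFC.sqrt B))ᴴ * fromBlocks (CFC.sqrt A) 0 0 (CFC.sqrt B) := by
    rw [fromBlocks_conjTranspose, fromBlocks_multiply]
    simp only [Matrix.mul_zero, Matrix.zero_mul, add_zero, zero_add,
      conjTranspose_zero]
    rw [(CFC.sqrt_nonneg A).posSemidef.1, (CFC.sqrt_nonneg B).posSemidef.1,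
      CFC.sqrt_mul_sqrt_self A hA.nonneg, CFC.sqrt_mul_sqrt_self B hB.nonneg]
  rw [heq]
  exact posSemidef_conjTranspose_mul_self _

lemma compress_psd {A X B : Matrix n n ℂ}
    (h : (fromBlocks (Vmat n * A * (Vmat n)ᴴ) (Vmat n * X * (Vmat n)ᴴ)
      (Vmat n * X * (Vmat n)ᴴ) (Vmat n * B * (Vmat n)ᴴ)).PosSemidef) :
    (fromBlocks A X X B).PosSemidef := by
  let W : Matrix ((n × n) ⊕ (n × n)) (n ⊕ n) ℂ := fromBlocks (Vmat n) 0 0 (Vmat n)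
  have h2 := h.conjTranspose_mul_mul_same W
  have key : Wᴴ * (fromBlocks (Vmat n * A * (Vmat n)ᴴ) (Vmat n * X * (Vmat n)ᴴ)
      (Vmat n * X * (Vmat n)ᴴ) (Vmat n * B * (Vmat n)ᴴ)) * W = fromBlocks A X X B := by
    show (fromBlocks (Vmat n) 0 0 (Vmat n))ᴴ * _ * fromBlocks (Vmat n) 0 0 (Vmat n) = _
    rw [fromBlocks_conjTranspose, fromBlocks_multiply, fromBlocks_multiply]
    simp only [Matrix.mul_zero, Matrix.zero_mul, add_zero, zero_add, conjTranspose_zero,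
      Vred]
  rwa [key] at h2

end AuxLemmas

/-- the Choi matrix of the Schur multiplier `S_A` is `V A V*`, where
`V : ℂⁿ → ℂⁿ ⊗ ℂⁿ` is the isometry `V eᵢ = eᵢ ⊗ eᵢ`; consequently the geometric mean of
Schur multipliers of positive semidefinite `A, B` is the Schur multiplier of `A # B`. -/
theorem schur_multiplier_geom_mean {n : Type*} [Fintype n] [DecidableEq n]
    (A B G : Matrix n n ℂ) (hA : A.PosSemidef) (hB : B.PosSemidef)
    (hG : IsGeomMean A B G)
    (V : Matrix (n × n) n ℂ) (hV : V = Matrix.of fun p i => if p = (i, i) then 1 else 0)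
    (Gmap : Matrix n n ℂ →ₗ[ℂ] Matrix n n ℂ)
    (hGmem : IsCP (blockMap (schurMap A) Gmap (schurMap B)))
    (hGmax : ∀ Θ : Matrix n n ℂ →ₗ[ℂ] Matrix n n ℂ,
      IsCP (blockMap (schurMap A) Θ (schurMap B)) → IsCP (Gmap - Θ)) :
    choi (schurMap A) = V * A * Vᴴ ∧ choi (schurMap B) = V * B * Vᴴ ∧
      Gmap = schurMap G := by
  have hVd : V = Vmat n := hV
  subst hVd
  refine ⟨choi_schurMap A, choi_schurMap B, ?_⟩
  -- Gmap is CP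
  have hs0 : schurMap (0 : Matrix n n ℂ) = 0 := by
    apply LinearMap.ext; intro x; ext i j
    show (0 : Matrix n n ℂ).hadamard x i j = 0
    simp [hadamard_apply]
  have h0cp : IsCP (blockMap (schurMap A) (0 : Matrix n n ℂ →ₗ[ℂ] Matrix n n ℂ) (schurMap B)) := by
    have := blockSchur_isCP A 0 B (fromBlocks_diag_psd hA hB)
    rwa [hs0] at this
  have hGcp : IsCP Gmap := by
    have := hGmax 0 h0cp
    rwa [sub_zero] at this
  -- the big Choi block matrix is PSD
  have hbig := fromBlocks_choi_psd hGmem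
  rw [choi_schurMap A, choi_schurMap B] at hbig
  -- extract X
  set X : Matrix n n ℂ := Matrix.of (fun i j => choi Gmap (i, i) (j, j)) with hXdef
  have hCB : choi Gmap = Vmat n * X * (Vmat n)ᴴ := by
    ext ⟨i, a⟩ ⟨j, b⟩
    rw [VXV_apply]
    by_cases hjb : j = b
    · by_cases hia : i = a
      · subst hia; subst hjb
        simp [hXdef]
      · have hd : (fromBlocks (Vmat n * A * (Vmat n)ᴴ) (choi Gmap) (choi Gmap)
            (Vmat n * B * (Vmat n)ᴴ)) (Sum.inl (i, a)) (Sum.inl (i, a)) = 0 := by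
          rw [fromBlocks_apply₁₁, VXV_apply]
          simp [hia]
        have h2 := (psd_row_col_zero hbig hd (Sum.inr (j, b))).2
        rw [fromBlocks_apply₁₂] at h2
        rw [h2]
        simp [hia]
    · have hd : (fromBlocks (Vmat n * A * (Vmat n)ᴴ) (choi Gmap) (choi Gmap)
          (Vmat n * B * (Vmat n)ᴴ)) (Sum.inr (j, b)) (Sum.inr (j, b)) = 0 := by
        rw [fromBlocks_apply₂₂, VXV_apply]
        simp [hjb]
      have h2 := (psd_row_col_zero hbig hd (Sum.inl (i, a))).1
      rw [fromBlocks_apply₁₂] at h2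
      rw [h2]
      simp [hjb]
  have hXpsd : X.PosSemidef := by
    have hc := choi_psd_of_isCP hGcp
    rw [hCB] at hc
    have h2 := hc.conjTranspose_mul_mul_same (Vmat n)
    rwa [Vred] at h2
  have hblock : (fromBlocks A X X B).PosSemidef := by
    apply compress_psd
    rwa [hCB] at hbig
  have hGX := hG.2.2 X hXpsd hblock
  have hGmapEq : Gmap = schurMap X := choi_inj (by rw [hCB, choi_schurMap])
  have hGcpXG : IsCP (schurMap X - schurMap G) := by
    have := hGmax (schurMap G) (blockSchur_isCP A G B hG.2.1)
    rwa [hGmapEq] at this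
  have hsub : schurMap X - schurMap G = schurMap (X - G) := by
    apply LinearMap.ext; intro x; ext i j
    show X.hadamard x i j - G.hadamard x i j = (X - G).hadamard x i j
    simp [hadamard_apply, sub_mul]
  rw [hsub] at hGcpXG
  have hXG : (X - G).PosSemidef := by
    let W1 : Matrix Unit (Fin 1 × n) ℂ := Matrix.of fun _ _ => 1
    have hJ : (W1ᴴ * W1).PosSemidef := posSemidef_conjTranspose_mul_self W1
    have hO := hGcpXG 1 _ hJ
    have heq : X - G = (Matrix.of fun p q : Fin 1 × n =>
        (schurMap (X - G)) (Matrix.of fun x y => (W1ᴴ * W1) (p.1, x) (q.1, y)) p.2 q.2).submatrix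
        (fun a : n => ((0 : Fin 1), a)) (fun a : n => ((0 : Fin 1), a)) := by
      ext i j
      rw [submatrix_apply, of_apply]
      show (X - G) i j = (X - G).hadamard _ i j
      simp [hadamard_apply, W1, mul_apply]
    rw [heq]
    exact hO.submatrix _
  have hzero : G - X = 0 := psd_antisymm hGX (by rw [neg_sub]; exact hXG)
  rw [hGmapEq, sub_eq_zero.mp hzero]
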